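/- Let p ≥ 1, q = exp(πi/(2p+1)), and r an odd integer with gcd(r, 2p+1) = 1. The p×p real matrix G with entries G_{ij} = (-1)^{(i-1)(j-1)} · (2/√(2p+1)) · sin(π r i j/(2p+1)) for 1 ≤ i,j ≤ p is orthogonal. -/

import Mathlib

open Real Finset

private lemma neg_one_pow_mod (m n : ℕ) (h : m % 2 = n % 2) : (-1:ℝ)^m = (-1:ℝ)^n := by
  rw [← Nat.div_add_mod m 2, ← Nat.div_add_mod n 2, pow_add, pow_add, pow_mul, pow_mul]
  norm_num [h]

private lemma full_cos_sum (N : ℕ) (u : ℤ) (hu : ¬ ((N:ℤ) ∣ u)) :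
    ∑ j ∈ Finset.range N, Real.cos (2*π*j*u/N) = 0 := by
  by_cases hN0 : N = 0
  · subst hN0; simp
  have hNR : (N:ℝ) ≠ 0 := Nat.cast_ne_zero.mpr hN0
  have hNC : (N:ℂ) ≠ 0 := Nat.cast_ne_zero.mpr hN0
  set z : ℂ := Complex.exp (2*π*Complex.I*u/N) with hz
  have hzN : z ^ N = 1 := by
    rw [hz, ← Complex.exp_nat_mul]
    rw [show (N:ℂ) * (2*π*Complex.I*u/N) = (u:ℤ) * (2*π*Complex.I) by
      field_simp [hNC]]
    exact Complex.exp_int_mul_two_pi_mul_I u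
  have hz1 : z ≠ 1 := by
    rw [hz, Ne, Complex.exp_eq_one_iff]
    rintro ⟨n, hn⟩
    apply hu
    have hπ : (π:ℂ) ≠ 0 := by exact_mod_cast Real.pi_ne_zero
    have hI : (Complex.I : ℂ) ≠ 0 := Complex.I_ne_zero
    have hc : (u:ℂ) = n * N := by
      apply mul_left_cancel₀ (mul_ne_zero (mul_ne_zero (two_ne_zero) hπ) hI)
      field_simp at hn
      ring_nf
      ring_nf at hn
      linear_combination (2*π*Complex.I) * hn
    have h2 : u = n * N := by exact_mod_cast hc
    exact ⟨n, by rw [h2]; ring⟩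
  have hgeom : ∑ j ∈ Finset.range N, z ^ j = 0 := by
    rw [geom_sum_eq hz1, hzN]
    simp
  have hre : ∀ j : ℕ, (z ^ j).re = Real.cos (2*π*j*u/N) := by
    intro j
    rw [← Complex.exp_nat_mul, show (j:ℂ) * (2*π*Complex.I*u/N) = ((2*π*j*u/N : ℝ) : ℂ) * Complex.I by push_cast; field_simp [hNC]]
    exact Complex.exp_ofReal_mul_I_re _
  calc ∑ j ∈ Finset.range N, Real.cos (2*π*j*u/N)
      = (∑ j ∈ Finset.range N, z ^ j).re := by
        rw [Complex.re_sum]; exact (Finset.sum_congr rfl fun j _ => (hre j).symm)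
    _ = 0 := by rw [hgeom]; simp

private lemma half_cos_sum (p : ℕ) (u : ℤ) :
    ∑ j ∈ Finset.range p, Real.cos (2*π*(j+1)*u/(2*p+1)) =
      if ((2*(p:ℤ)+1) ∣ u) then (p:ℝ) else -1/2 := by
  set N : ℕ := 2*p+1 with hN
  have hNR : (N:ℝ) = 2*p+1 := by push_cast [hN]; ring
  by_cases hdvd : ((2*(p:ℤ)+1) ∣ u)
  · rw [if_pos hdvd]
    obtain ⟨t, ht⟩ := hdvd
    have : ∀ j ∈ Finset.range p, Real.cos (2*π*(j+1)*u/(2*p+1)) = 1 := by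
      intro j _
      rw [show 2*π*(j+1)*u/(2*(p:ℝ)+1) = ((((j:ℤ)+1)*t) : ℤ) * (2*π) by
        push_cast [ht]
        have h0 : (2*(p:ℝ)+1) ≠ 0 := by positivity
        field_simp]
      exact Real.cos_int_mul_two_pi _
    rw [Finset.sum_congr rfl this]
    simp
  · rw [if_neg hdvd]
    have hdvd' : ¬ ((N:ℤ) ∣ u) := by
      intro h; apply hdvd; rwa [show ((N:ℤ)) = 2*(p:ℤ)+1 by push_cast [hN]; ring] at h
    have hfull := full_cos_sum N u hdvd'
    -- split: range N = range (2p+1); f 0 = 1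
    set f : ℕ → ℝ := fun j => Real.cos (2*π*j*u/N) with hf
    have h1 : ∑ j ∈ Finset.range N, f j = ∑ j ∈ Finset.range (2*p), f (j+1) + f 0 := by
      rw [hN]; exact Finset.sum_range_succ' f (2*p)
    have hsplit : ∑ j ∈ Finset.range (2*p), f (j+1)
        = ∑ j ∈ Finset.range p, f (j+1) + ∑ j ∈ Finset.range p, f (p+j+1) := by
      rw [show 2*p = p + p by ring]
      rw [Finset.sum_range_add]
    have hrefl : ∑ j ∈ Finset.range p, f (p+j+1) = ∑ j ∈ Finset.range p, f (j+1) := by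
      rw [← Finset.sum_range_reflect (fun j => f (p+j+1)) p]
      apply Finset.sum_congr rfl
      intro j hj
      have hj' : j < p := Finset.mem_range.mp hj
      have hkey : p + (p - 1 - j) + 1 = N - (j+1) := by omega
      rw [hkey]
      have hsub : ((N - (j+1) : ℕ) : ℝ) = (N:ℝ) - (j+1) := by
        have : j + 1 ≤ N := by omega
        push_cast [this]; ring
      have hN0 : (N:ℝ) ≠ 0 := by rw [hNR]; positivity
      have per : ∀ x:ℝ, Real.cos ((u:ℝ)*(2*π) - x) = Real.cos x := fun x => Real.cos_int_mul_two_pi_sub x u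
      simp only [hf]
      rw [hsub]
      push_cast
      have h0 : (2*(p:ℝ)+1) ≠ 0 := by positivity
      rw [hNR, show 2*π*(2*(p:ℝ)+1 - ((j:ℝ)+1))*u/(2*(p:ℝ)+1) = (u:ℝ)*(2*π) - 2*π*((j:ℝ)+1)*u/(2*(p:ℝ)+1) by field_simp]
      exact per _
    have hf0 : f 0 = 1 := by simp [hf]
    have heq : ∀ j ∈ Finset.range p, Real.cos (2*π*(j+1)*u/(2*p+1)) = f (j+1) := by
      intro j _
      rw [hf]; simp only []; rw [hNR]; push_cast; ring_nf
    rw [Finset.sum_congr rfl heq]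
    linarith [h1, hsplit, hrefl, hf0, hfull]

private lemma half_cos_sum' (p : ℕ) (v : ℤ) (hv : Even v) :
    ∑ j ∈ Finset.range p, Real.cos (π*(j+1)*v/(2*p+1)) =
      if ((2*(p:ℤ)+1) ∣ v) then (p:ℝ) else -1/2 := by
  obtain ⟨u, rfl⟩ := hv
  have hco2 : IsCoprime (2*(p:ℤ)+1) 2 := by
    exact ⟨-1, (p:ℤ)+1, by ring⟩
  have hiff : ((2*(p:ℤ)+1) ∣ u + u) ↔ ((2*(p:ℤ)+1) ∣ u) := by
    constructor
    · intro h
      exact hco2.dvd_of_dvd_mul_left (by rwa [show 2*u = u + u by ring])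
    · intro h
      exact dvd_add h h
  rw [show (if ((2*(p:ℤ)+1) ∣ u + u) then (p:ℝ) else -1/2)
        = (if ((2*(p:ℤ)+1) ∣ u) then (p:ℝ) else -1/2) by simp [hiff]]
  rw [← half_cos_sum p u]
  apply Finset.sum_congr rfl
  intro j _
  congr 1
  push_cast
  ring

private lemma pointwise (p i k j : ℕ) (r : ℤ) (hr : Odd r) :
    ((-1:ℝ)^(i*j) * Real.sin (π*r*(i+1)*(j+1)/(2*(p:ℝ)+1))) *
      ((-1:ℝ)^(k*j) * Real.sin (π*r*(k+1)*(j+1)/(2*(p:ℝ)+1)))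
    = (-1:ℝ)^(i+k)/2 *
      (Real.cos (π*((j:ℝ)+1)*(((r*((i:ℤ)-k) + (2*(p:ℤ)+1)*((i:ℤ)+k)) : ℤ) : ℝ)/(2*(p:ℝ)+1))
       - Real.cos (π*((j:ℝ)+1)*(((r*((i:ℤ)+k+2) + (2*(p:ℤ)+1)*((i:ℤ)+k)) : ℤ) : ℝ)/(2*(p:ℝ)+1))) := by
  have hN0 : (2*(p:ℝ)+1) ≠ 0 := by positivity
  set A : ℝ := π*r*(i+1)*(j+1)/(2*(p:ℝ)+1) with hA
  set B : ℝ := π*r*(k+1)*(j+1)/(2*(p:ℝ)+1) with hB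
  have h1 : π*((j:ℝ)+1)*(((r*((i:ℤ)-k) + (2*(p:ℤ)+1)*((i:ℤ)+k)) : ℤ) : ℝ)/(2*(p:ℝ)+1)
      = (A - B) + ((i+k)*(j+1) : ℕ)*π := by
    rw [hA, hB]; push_cast; field_simp; ring
  have h2 : π*((j:ℝ)+1)*(((r*((i:ℤ)+k+2) + (2*(p:ℤ)+1)*((i:ℤ)+k)) : ℤ) : ℝ)/(2*(p:ℝ)+1)
      = (A + B) + ((i+k)*(j+1) : ℕ)*π := by
    rw [hA, hB]; push_cast; field_simp; ring
  rw [h1, h2, Real.cos_add_nat_mul_pi, Real.cos_add_nat_mul_pi]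
  have hsign : (-1:ℝ)^(i+k) * (-1:ℝ)^((i+k)*(j+1)) = (-1:ℝ)^(i*j) * (-1:ℝ)^(k*j) := by
    rw [← pow_add, ← pow_add]
    apply neg_one_pow_mod
    rw [show (i+k) + (i+k)*(j+1) = (i+k)*j + 2*(i+k) + ((i+k)*0) by ring,
        show i*j + k*j = (i+k)*j by ring]
    omega
  have key : (-1:ℝ)^(i*j) * Real.sin A * ((-1:ℝ)^(k*j) * Real.sin B)
      = ((-1:ℝ)^(i*j) * (-1:ℝ)^(k*j)) * (Real.sin A * Real.sin B) := by ring
  rw [key, ← hsign, Real.cos_sub, Real.cos_add]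
  ring

private lemma core (p : ℕ) (hp : 1 ≤ p) (r : ℤ) (hr : Odd r)
    (hcop : Int.gcd r (2 * p + 1) = 1) (i k : ℕ) (hi : i < p) (hk : k < p) :
    ∑ j ∈ Finset.range p,
      (((-1:ℝ)^(i*j) * (2/Real.sqrt (2*(p:ℝ)+1)) * Real.sin (π*r*(i+1)*(j+1)/(2*(p:ℝ)+1))) *
       ((-1:ℝ)^(k*j) * (2/Real.sqrt (2*(p:ℝ)+1)) * Real.sin (π*r*(k+1)*(j+1)/(2*(p:ℝ)+1))))
    = if i = k then 1 else 0 := by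
  have hNpos : (0:ℝ) < 2*(p:ℝ)+1 := by positivity
  have hN0 : (2*(p:ℝ)+1) ≠ 0 := ne_of_gt hNpos
  have hconst : (2/Real.sqrt (2*(p:ℝ)+1)) * (2/Real.sqrt (2*(p:ℝ)+1)) = 4/(2*(p:ℝ)+1) := by
    rw [div_mul_div_comm, Real.mul_self_sqrt (le_of_lt hNpos)]
    norm_num
  set v₁ : ℤ := r*((i:ℤ)-k) + (2*(p:ℤ)+1)*((i:ℤ)+k) with hv₁
  set v₂ : ℤ := r*((i:ℤ)+k+2) + (2*(p:ℤ)+1)*((i:ℤ)+k) with hv₂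
  obtain ⟨m, hm⟩ := hr
  have hev₁ : Even v₁ := ⟨m*((i:ℤ)-k) + (p:ℤ)*((i:ℤ)+k) + i, by rw [hv₁, hm]; ring⟩
  have hev₂ : Even v₂ := ⟨m*((i:ℤ)+k+2) + (p:ℤ)*((i:ℤ)+k) + (i+k+1), by rw [hv₂, hm]; ring⟩
  have hterm : ∀ j ∈ Finset.range p,
      (((-1:ℝ)^(i*j) * (2/Real.sqrt (2*(p:ℝ)+1)) * Real.sin (π*r*(i+1)*(j+1)/(2*(p:ℝ)+1))) *
       ((-1:ℝ)^(k*j) * (2/Real.sqrt (2*(p:ℝ)+1)) * Real.sin (π*r*(k+1)*(j+1)/(2*(p:ℝ)+1))))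
      = (4/(2*(p:ℝ)+1)) * ((-1:ℝ)^(i+k)/2 *
          (Real.cos (π*((j:ℝ)+1)*(v₁:ℝ)/(2*(p:ℝ)+1)) - Real.cos (π*((j:ℝ)+1)*(v₂:ℝ)/(2*(p:ℝ)+1)))) := by
    intro j _
    rw [← pointwise p i k j r ⟨m, hm⟩, ← hconst]
    ring
  rw [Finset.sum_congr rfl hterm, ← Finset.mul_sum]
  have hsubsum : ∑ j ∈ Finset.range p, ((-1:ℝ)^(i+k)/2 *
      (Real.cos (π*((j:ℝ)+1)*(v₁:ℝ)/(2*(p:ℝ)+1)) - Real.cos (π*((j:ℝ)+1)*(v₂:ℝ)/(2*(p:ℝ)+1))))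
      = (-1:ℝ)^(i+k)/2 *
        ((∑ j ∈ Finset.range p, Real.cos (π*(j+1)*(v₁:ℝ)/(2*p+1)))
          - ∑ j ∈ Finset.range p, Real.cos (π*(j+1)*(v₂:ℝ)/(2*p+1))) := by
    rw [← Finset.mul_sum, Finset.sum_sub_distrib]
  rw [hsubsum, half_cos_sum' p v₁ hev₁, half_cos_sum' p v₂ hev₂]
  have hco : IsCoprime (2*(p:ℤ)+1) r := (Int.isCoprime_iff_gcd_eq_one.mpr hcop).symm
  have hnd₂ : ¬ ((2*(p:ℤ)+1) ∣ v₂) := by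
    intro h
    have h2 : (2*(p:ℤ)+1) ∣ r * ((i:ℤ)+k+2) := by
      have hd := dvd_sub h (dvd_mul_right (2*(p:ℤ)+1) ((i:ℤ)+k))
      rwa [show v₂ - (2*(p:ℤ)+1)*((i:ℤ)+k) = r*((i:ℤ)+k+2) by rw [hv₂]; ring] at hd
    have h4 : (2*(p:ℤ)+1) ∣ ((i:ℤ)+k+2) := hco.dvd_of_dvd_mul_left h2
    have h5 := Int.le_of_dvd (by positivity) h4
    have hip : (i:ℤ) < p := by exact_mod_cast hi
    have hkp : (k:ℤ) < p := by exact_mod_cast hk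
    omega
  rw [if_neg hnd₂]
  by_cases hik : i = k
  · subst hik
    have hd₁ : (2*(p:ℤ)+1) ∣ v₁ := ⟨(i:ℤ)+i, by rw [hv₁]; ring⟩
    rw [if_pos hd₁, if_pos rfl]
    have : (-1:ℝ)^(i+i) = 1 := Even.neg_one_pow ⟨i, rfl⟩
    rw [this]
    field_simp
    ring
  · have hnd₁ : ¬ ((2*(p:ℤ)+1) ∣ v₁) := by
      intro h
      have h2 : (2*(p:ℤ)+1) ∣ r * ((i:ℤ)-k) := by
        have hd := dvd_sub h (dvd_mul_right (2*(p:ℤ)+1) ((i:ℤ)+k))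
        rwa [show v₁ - (2*(p:ℤ)+1)*((i:ℤ)+k) = r*((i:ℤ)-k) by rw [hv₁]; ring] at hd
      have h4 : (2*(p:ℤ)+1) ∣ ((i:ℤ)-k) := hco.dvd_of_dvd_mul_left h2
      have hip : (i:ℤ) < p := by exact_mod_cast hi
      have hkp : (k:ℤ) < p := by exact_mod_cast hk
      have h5 : ((i:ℤ)-k) = 0 := Int.eq_zero_of_abs_lt_dvd h4 (by rw [abs_lt]; omega)
      omega
    rw [if_neg hnd₁, if_neg hik]
    ring

theorem G_matrix_orthogonal (p : ℕ) (hp : 1 ≤ p) (r : ℤ) (hr : Odd r)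
    (hcop : Int.gcd r (2 * p + 1) = 1) :
    let G : Matrix (Fin p) (Fin p) ℝ := fun i j =>
      (-1 : ℝ) ^ ((i : ℕ) * (j : ℕ)) * (2 / Real.sqrt (2 * p + 1)) *
        Real.sin (Real.pi * r * ((i : ℕ) + 1) * ((j : ℕ) + 1) / (2 * p + 1))
    G * G.transpose = 1 := by
  intro G
  have hG : G = fun (i j : Fin p) =>
      (-1 : ℝ) ^ ((i : ℕ) * (j : ℕ)) * (2 / Real.sqrt (2 * p + 1)) *
        Real.sin (Real.pi * r * ((i : ℕ) + 1) * ((j : ℕ) + 1) / (2 * p + 1)) := rfl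
  ext i k
  rw [Matrix.mul_apply, Matrix.one_apply]
  simp only [Matrix.transpose_apply]
  simp only [hG]
  rw [Fin.sum_univ_eq_sum_range (fun j =>
      (((-1:ℝ)^((i:ℕ)*j) * (2/Real.sqrt (2*(p:ℝ)+1)) * Real.sin (π*r*((i:ℕ)+1)*(j+1)/(2*(p:ℝ)+1))) *
       ((-1:ℝ)^((k:ℕ)*j) * (2/Real.sqrt (2*(p:ℝ)+1)) * Real.sin (π*r*((k:ℕ)+1)*(j+1)/(2*(p:ℝ)+1)))) ) p]
  rw [core p hp r hr hcop (i:ℕ) (k:ℕ) i.isLt k.isLt]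
  congr 1
  simp [Fin.ext_iff]
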